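/- arXiv:1202.1233 — 4 statements merged into one kernel-verified Lean document; each statement's English description precedes it below -/
import Mathlib

section
/- For every φ ∈ X_J (with complex or real entries), ‖φ‖_∞ ≤ √2 · ‖φ‖₂^{1/2} · ‖D₊φ‖₂^{1/2}. -/
set_option maxHeartbeats 1000000


/-- Discrete Gagliardo–Nirenberg inequality (80) of Lemma 1.1:
for every `φ ∈ X_J`, `‖φ‖_∞ ≤ √2 ‖φ‖₂^{1/2} ‖D₊φ‖₂^{1/2}`. -/
theorem discrete_gagliardo_nirenberg
    (J : ℕ) (hJ : 5 ≤ J) (L h : ℝ) (hL : 0 < L) (hh : h = L / (J + 1))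
    (φ : ℕ → ℂ)
    (h0 : φ 0 = 0) (h1 : φ 1 = 0) (hJ0 : φ J = 0) (hJ1 : φ (J + 1) = 0) :
    (Finset.Icc 2 (J - 1)).sup' (Finset.nonempty_Icc.mpr (by omega))
        (fun j => ‖φ j‖) ≤
      Real.sqrt 2
        * Real.sqrt (Real.sqrt (∑ j ∈ Finset.Icc 2 (J - 1),
            h * ‖φ j‖ ^ 2))
        * Real.sqrt (Real.sqrt (∑ j ∈ Finset.Icc 1 (J - 1),
            h * ‖(φ (j + 1) - φ j) / (h : ℂ)‖ ^ 2)) := by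
  have hpos : 0 < h := by rw [hh]; positivity
  have hne : h ≠ 0 := ne_of_gt hpos
  set a : ℕ → ℝ := fun k => ‖φ k‖ with ha
  have ha0 : ∀ k, 0 ≤ a k := fun k => norm_nonneg _
  set S : ℝ := ∑ k ∈ Finset.Icc 2 (J-1), a k ^ 2 with hS
  set T : ℝ := ∑ k ∈ Finset.Icc 1 (J-1), ‖φ (k+1) - φ k‖ ^ 2 with hT
  have hS0 : 0 ≤ S := Finset.sum_nonneg fun _ _ => by positivity
  have hT0 : 0 ≤ T := Finset.sum_nonneg fun _ _ => by positivity
  clear_value a S T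
  have hIcc1 : Finset.Icc 1 (J-1) = Finset.Ico 1 J := by
    rw [← Finset.Ico_add_one_right_eq_Icc]; congr 1; omega
  have hIcc2 : Finset.Icc 2 (J-1) = Finset.Ico 2 J := by
    rw [← Finset.Ico_add_one_right_eq_Icc]; congr 1; omega
  have hsum_f : ∑ k ∈ Finset.range J, a k ^ 2 = S := by
    rw [Finset.range_eq_Ico, Finset.sum_eq_sum_Ico_succ_bot (by omega : 0 < J),
        Finset.sum_eq_sum_Ico_succ_bot (by omega : 1 < J)]
    simp [ha, h0, h1, hS, hIcc2]
  have hsum_fs : ∑ k ∈ Finset.range J, a (k+1) ^ 2 = S := by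
    have e1 : ∑ k ∈ Finset.range J, a (k+1) ^ 2 = ∑ i ∈ Finset.Ico 1 (J+1), a i ^ 2 := by
      rw [Finset.sum_Ico_eq_sum_range]
      simp [add_comm]
    rw [e1, Finset.sum_Ico_succ_top (by omega : 1 ≤ J),
        Finset.sum_eq_sum_Ico_succ_bot (by omega : 1 < J)]
    simp [ha, h1, hJ0, hS, hIcc2]
  have hsum_T : ∑ k ∈ Finset.range J, ‖φ (k+1) - φ k‖ ^ 2 = T := by
    rw [Finset.range_eq_Ico, Finset.sum_eq_sum_Ico_succ_bot (by omega : 0 < J)]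
    simp [h0, h1, hT, hIcc1]
  -- key pointwise bound
  have key : ∀ j ∈ Finset.Icc 2 (J-1), a j ^ 2 ≤ 2 * (Real.sqrt S * Real.sqrt T) := by
    intro j hj
    obtain ⟨hj2, hjJ⟩ := Finset.mem_Icc.mp hj
    have htel : a j ^ 2 = ∑ k ∈ Finset.range j, (a (k+1) ^ 2 - a k ^ 2) := by
      rw [Finset.sum_range_sub (fun k => a k ^ 2)]
      simp [ha, h0]
    have hstep : ∀ k, a (k+1) ^ 2 - a k ^ 2
        ≤ (a (k+1) + a k) * ‖φ (k+1) - φ k‖ := by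
      intro k
      have e : a (k+1) ^ 2 - a k ^ 2 = (a (k+1) + a k) * (a (k+1) - a k) := by ring
      rw [e]
      refine mul_le_mul_of_nonneg_left ?_ (add_nonneg (ha0 _) (ha0 _))
      calc a (k+1) - a k ≤ |a (k+1) - a k| := le_abs_self _
        _ ≤ ‖φ (k+1) - φ k‖ := by
            simpa [ha] using abs_norm_sub_norm_le (φ (k+1)) (φ k)
    have h2 : a j ^ 2 ≤ ∑ k ∈ Finset.range J,
        (a (k+1) + a k) * ‖φ (k+1) - φ k‖ := by
      rw [htel]
      calc ∑ k ∈ Finset.range j, (a (k+1) ^ 2 - a k ^ 2)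
          ≤ ∑ k ∈ Finset.range j, (a (k+1) + a k) * ‖φ (k+1) - φ k‖ :=
            Finset.sum_le_sum fun k _ => hstep k
        _ ≤ ∑ k ∈ Finset.range J, (a (k+1) + a k) * ‖φ (k+1) - φ k‖ :=
            Finset.sum_le_sum_of_subset_of_nonneg (Finset.range_subset_range.mpr (by omega))
              (fun k _ _ => mul_nonneg (add_nonneg (ha0 _) (ha0 _)) (norm_nonneg _))
    have hCS : (∑ k ∈ Finset.range J, (a (k+1) + a k) * ‖φ (k+1) - φ k‖) ^ 2
        ≤ (∑ k ∈ Finset.range J, (a (k+1) + a k) ^ 2)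
          * ∑ k ∈ Finset.range J, ‖φ (k+1) - φ k‖ ^ 2 :=
      Finset.sum_mul_sq_le_sq_mul_sq _ _ _
    have hU : ∑ k ∈ Finset.range J, (a (k+1) + a k) ^ 2 ≤ 4 * S := by
      calc ∑ k ∈ Finset.range J, (a (k+1) + a k) ^ 2
          ≤ ∑ k ∈ Finset.range J, (2 * a (k+1) ^ 2 + 2 * a k ^ 2) := by
            refine Finset.sum_le_sum fun k _ => ?_
            nlinarith [sq_nonneg (a (k+1) - a k)]
        _ = 4 * S := by
            rw [Finset.sum_add_distrib, ← Finset.mul_sum, ← Finset.mul_sum, hsum_f, hsum_fs]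
            ring
    have hfinal : (a j ^ 2) ^ 2 ≤ 4 * S * T := by
      calc (a j ^ 2) ^ 2
          ≤ (∑ k ∈ Finset.range J, (a (k+1) + a k) * ‖φ (k+1) - φ k‖) ^ 2 :=
            pow_le_pow_left₀ (by positivity) h2 2
        _ ≤ (4 * S) * T := by
            rw [← hsum_T]
            refine hCS.trans (mul_le_mul_of_nonneg_right hU ?_)
            rw [hsum_T]; exact hT0
        _ = 4 * S * T := by ring
    have h4 : Real.sqrt 4 = 2 := by
      rw [show (4:ℝ) = 2 ^ 2 by norm_num]
      exact Real.sqrt_sq (by norm_num)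
    have hsqrt : Real.sqrt (4 * S * T) = 2 * (Real.sqrt S * Real.sqrt T) := by
      rw [Real.sqrt_mul (by positivity : (0:ℝ) ≤ 4 * S) T,
        Real.sqrt_mul (by norm_num : (0:ℝ) ≤ 4) S, h4, mul_assoc]
    calc a j ^ 2 ≤ Real.sqrt (4 * S * T) := Real.le_sqrt_of_sq_le hfinal
      _ = 2 * (Real.sqrt S * Real.sqrt T) := hsqrt
  -- rewrite the scaled sums
  have hA : (∑ j ∈ Finset.Icc 2 (J-1), h * ‖φ j‖ ^ 2) = h * S := by
    simp [hS, ha, Finset.mul_sum]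
  have hB : (∑ j ∈ Finset.Icc 1 (J-1),
      h * ‖(φ (j+1) - φ j) / (h : ℂ)‖ ^ 2) = T / h := by
    rw [hT, Finset.sum_div]
    refine Finset.sum_congr rfl fun k _ => ?_
    rw [norm_div, Complex.norm_real, Real.norm_eq_abs, abs_of_pos hpos, div_pow]
    field_simp
  rw [hA, hB]
  have hprod : Real.sqrt 2 * Real.sqrt (Real.sqrt (h * S)) * Real.sqrt (Real.sqrt (T / h))
      = Real.sqrt (2 * (Real.sqrt S * Real.sqrt T)) := by
    rw [mul_assoc, ← Real.sqrt_mul (by positivity), ← Real.sqrt_mul (by norm_num : (0:ℝ) ≤ 2),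
      ← Real.sqrt_mul (by positivity)]
    congr 2
    rw [show h * S * (T / h) = S * T by field_simp, Real.sqrt_mul hS0]
  rw [hprod]
  apply Finset.sup'_le
  intro j hj
  exact Real.le_sqrt_of_sq_le (key j hj)
end

section
/- Let α, β ∈ ℝ, let g : ℝ → ℝ be any (real-valued) function, and let T > 0. Suppose u : [0,T] → ℂ^{J+2} and v : [0,T] → ℝ^{J+2} are differentiable, with u(t), v(t) ∈ X_J for every t ∈ [0,T], and satisfy the semidiscrete Schrödinger equation i u_j′(t) + Δʰu_j(t) = β|u_j(t)|² u_j(t) + α g(v_j(t)) u_j(t) for all j = 2,…,J−1 and all t ∈ [0,T]. Then the discrete L² norm is conserved: ‖u(t)‖₂ = ‖u(0)‖₂ for all t ∈ [0,T]. -/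
private lemma tele_sum (F : ℕ → ℝ) : ∀ n, 2 ≤ n →
    ∑ j ∈ Finset.Icc 2 n, (F (j - 1) - F j) = F 1 - F n := by
  intro n hn
  induction n, hn using Nat.le_induction with
  | base => simp
  | succ n hn ih =>
      rw [Finset.sum_Icc_succ_top (by omega), ih]
      simp only [Nat.add_sub_cancel]
      ring

/-- Conservation of the discrete `L²` norm for the semidiscrete Schrödinger equation
`i u_j′ + Δʰ u_j = β|u_j|²u_j + α g(v_j) u_j` on `X_J`:
`‖u(t)‖₂ = ‖u(0)‖₂` for all `t ∈ [0,T]`. -/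
theorem semidiscrete_schrodinger_mass_conservation
    (J : ℕ) (hJ : 5 ≤ J) (L h : ℝ) (hL : 0 < L) (hh : h = L / (J + 1))
    (α β T : ℝ) (hT : 0 < T) (g : ℝ → ℝ)
    (u : ℝ → ℕ → ℂ) (u' : ℝ → ℕ → ℂ) (v : ℝ → ℕ → ℝ) (v' : ℝ → ℕ → ℝ)
    (hu : ∀ j : ℕ, ∀ t ∈ Set.Icc (0 : ℝ) T,
      HasDerivWithinAt (fun s => u s j) (u' t j) (Set.Icc (0 : ℝ) T) t)
    (hv : ∀ j : ℕ, ∀ t ∈ Set.Icc (0 : ℝ) T,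
      HasDerivWithinAt (fun s => v s j) (v' t j) (Set.Icc (0 : ℝ) T) t)
    (hubc : ∀ t ∈ Set.Icc (0 : ℝ) T,
      u t 0 = 0 ∧ u t 1 = 0 ∧ u t J = 0 ∧ u t (J + 1) = 0)
    (hvbc : ∀ t ∈ Set.Icc (0 : ℝ) T,
      v t 0 = 0 ∧ v t 1 = 0 ∧ v t J = 0 ∧ v t (J + 1) = 0)
    (heq : ∀ t ∈ Set.Icc (0 : ℝ) T, ∀ j ∈ Finset.Icc 2 (J - 1),
      Complex.I * u' t j + (u t (j + 1) - 2 * u t j + u t (j - 1)) / (h : ℂ) ^ 2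
        = (β : ℂ) * (‖u t j‖ : ℂ) ^ 2 * u t j
          + (α : ℂ) * (g (v t j) : ℂ) * u t j) :
    ∀ t ∈ Set.Icc (0 : ℝ) T,
      Real.sqrt (∑ j ∈ Finset.Icc 2 (J - 1), h * ‖u t j‖ ^ 2)
        = Real.sqrt (∑ j ∈ Finset.Icc 2 (J - 1), h * ‖u 0 j‖ ^ 2) := by
  have hhpos : 0 < h := by
    rw [hh]; positivity
  have hhne : (h : ℝ) ≠ 0 := ne_of_gt hhpos
  set S := Finset.Icc 2 (J - 1) with hS
  set f : ℝ → ℝ := fun s => ∑ j ∈ S, h * ((u s j) * (starRingEnd ℂ) (u s j)).re with hf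
  -- derivative of f is zero on Icc 0 T
  have hderiv : ∀ x ∈ Set.Icc (0 : ℝ) T, HasDerivWithinAt f 0 (Set.Icc 0 T) x := by
    intro x hx
    have key : ∀ j ∈ S,
        h * ((u' x j) * (starRingEnd ℂ) (u x j) + (u x j) * (starRingEnd ℂ) (u' x j)).re
          = (2 / h) * ((u x j * (starRingEnd ℂ) (u x (j - 1))).im
              - (u x (j + 1) * (starRingEnd ℂ) (u x j)).im) := by
      intro j hj
      have hb : u' x j = Complex.I * ((u x (j + 1) - 2 * u x j + u x (j - 1)) / (h : ℂ) ^ 2)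
          - ((β : ℂ) * (‖u x j‖ : ℂ) ^ 2 * u x j
            + (α : ℂ) * (g (v x j) : ℂ) * u x j) * Complex.I := by
        have h1 := heq x hx j hj
        have hI : (Complex.I : ℂ) * Complex.I = -1 := Complex.I_mul_I
        linear_combination (-Complex.I) * h1 + (u' x j) * hI
      have hdiv : ∀ z : ℂ, z / (h : ℂ) ^ 2 = z * (((h ^ 2)⁻¹ : ℝ) : ℂ) := by
        intro z
        rw [div_eq_mul_inv]
        push_cast
        ring
      rw [hb, hdiv]
      simp only [map_mul, map_add, map_sub, Complex.conj_I, Complex.conj_conj,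
        Complex.conj_ofReal, Complex.mul_re, Complex.mul_im, Complex.add_re, Complex.add_im,
        Complex.sub_re, Complex.sub_im, Complex.I_re, Complex.I_im, Complex.ofReal_re,
        Complex.ofReal_im, Complex.neg_re, Complex.neg_im, ← Complex.ofReal_pow,
        Complex.conj_re, Complex.conj_im, Complex.im_ofNat, Complex.re_ofNat]
      field_simp
      ring
    have hsum : (0 : ℝ) = ∑ j ∈ S,
        h * ((u' x j) * (starRingEnd ℂ) (u x j) + (u x j) * (starRingEnd ℂ) (u' x j)).re := by
      rw [Finset.sum_congr rfl key, ← Finset.mul_sum]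
      have := tele_sum (fun j => (u x (j + 1) * (starRingEnd ℂ) (u x j)).im) (J - 1) (by omega)
      have hrw : ∀ j ∈ S, ((u x j * (starRingEnd ℂ) (u x (j - 1))).im
            - (u x (j + 1) * (starRingEnd ℂ) (u x j)).im)
          = ((fun j => (u x (j + 1) * (starRingEnd ℂ) (u x j)).im) (j - 1)
            - (fun j => (u x (j + 1) * (starRingEnd ℂ) (u x j)).im) j) := by
        intro j hj
        simp only [hS, Finset.mem_Icc] at hj
        have : j - 1 + 1 = j := by omega
        simp only [this]
      rw [Finset.sum_congr rfl hrw, this]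
      have h1 : u x 1 = 0 := (hubc x hx).2.1
      have hJ0 : u x J = 0 := (hubc x hx).2.2.1
      have hJ1 : J - 1 + 1 = J := by omega
      simp [h1, hJ1, hJ0]
    have : HasDerivWithinAt f (∑ j ∈ S,
        h * ((u' x j) * (starRingEnd ℂ) (u x j) + (u x j) * (starRingEnd ℂ) (u' x j)).re)
        (Set.Icc 0 T) x := by
      apply HasDerivWithinAt.fun_sum
      intro j hj
      have hu1 := hu j x hx
      have hu2 : HasDerivWithinAt (fun s => (starRingEnd ℂ) (u s j))
          ((starRingEnd ℂ) (u' x j)) (Set.Icc 0 T) x := hu1.star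
      have hmul := hu1.mul hu2
      have hre := (Complex.reCLM.hasFDerivAt).comp_hasDerivWithinAt x hmul
      exact hre.const_mul h
    rwa [← hsum] at this
  -- f is constant on Icc 0 T
  have hcont : ContinuousOn f (Set.Icc 0 T) := fun x hx => (hderiv x hx).continuousWithinAt
  have hconst : ∀ x ∈ Set.Icc (0 : ℝ) T, f x = f 0 := by
    apply constant_of_has_deriv_right_zero hcont
    intro x hx
    apply (hderiv x (Set.mem_Icc_of_Ico hx)).mono_of_mem_nhdsWithin
    rw [mem_nhdsWithin]
    refine ⟨Set.Ioo (x - 1) T, isOpen_Ioo, ⟨by simp, hx.2⟩, ?_⟩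
    rintro y ⟨⟨_, hy2⟩, hy3⟩
    exact ⟨le_trans hx.1 hy3, le_of_lt hy2⟩
  intro t ht
  have := hconst t ht
  simp only [hf] at this
  have habs : ∀ s, ∑ j ∈ S, h * ‖u s j‖ ^ 2
      = ∑ j ∈ S, h * ((u s j) * (starRingEnd ℂ) (u s j)).re := by
    intro s
    refine Finset.sum_congr rfl fun j _ => ?_
    rw [Complex.sq_norm, Complex.mul_conj]
    simp
  rw [habs, habs, this]
end

section
/- Let γ ∈ ℝ, let f, g : ℝ → ℝ be differentiable with f(0) = 0, and let T > 0. Suppose u : [0,T] → ℂ^{J+2} and v : [0,T] → ℝ^{J+2} are differentiable, with u(t), v(t) ∈ X_J for every t, and satisfy the semidiscrete KdV equation v_j′(t) + (D³v(t))_j + (D₀ f(v(t)))_j = γ (D₀ (g′(v(t))|u(t)|²))_j for all j = 2,…,J−1 and all t ∈ [0,T], where f(v), g′(v)|u|² are applied componentwise. Then for every t, (1/2)·(d/dt)‖v(t)‖₂² = Σ_{j=2}^{J−1} h f(v_j(t)) (D₀v(t))_j − γ Σ_{j=2}^{J−1} h g′(v_j(t)) |u_j(t)|² (D₀v(t))_j.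 -/
private lemma sum_shift_k (c : ℕ → ℝ) (k m n : ℕ) :
    ∑ j ∈ Finset.Icc m n, c (j + k) = ∑ j ∈ Finset.Icc (m + k) (n + k), c j := by
  rw [← Finset.map_add_right_Icc, Finset.sum_map]
  rfl

private lemma sum_dropL (c : ℕ → ℝ) (m n : ℕ) (hmn : m ≤ n) :
    ∑ j ∈ Finset.Icc m n, c j = c m + ∑ j ∈ Finset.Icc (m + 1) n, c j := by
  have hset : Finset.Icc m n = insert m (Finset.Icc (m + 1) n) := by
    ext x; simp only [Finset.mem_Icc, Finset.mem_insert]; omega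
  rw [hset, Finset.sum_insert (by simp [Finset.mem_Icc])]

private lemma sum_dropR (c : ℕ → ℝ) (m n : ℕ) (hmn : m ≤ n) (hn : 1 ≤ n) :
    ∑ j ∈ Finset.Icc m n, c j = (∑ j ∈ Finset.Icc m (n - 1), c j) + c n := by
  have hset : Finset.Icc m n = insert n (Finset.Icc m (n - 1)) := by
    ext x; simp only [Finset.mem_Icc, Finset.mem_insert]; omega
  rw [hset, Finset.sum_insert (by simp only [Finset.mem_Icc]; omega), add_comm]

private lemma shiftA (J : ℕ) (hJ : 5 ≤ J) (a w : ℕ → ℝ)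
    (ha1 : a 1 = 0) (hwJ : w J = 0) :
    ∑ j ∈ Finset.Icc 2 (J - 1), a j * w (j + 1)
      = ∑ j ∈ Finset.Icc 2 (J - 1), a (j - 1) * w j := by
  have e1 : ∀ j ∈ Finset.Icc 2 (J - 1),
      a j * w (j + 1) = (fun i => a (i - 1) * w i) (j + 1) := by
    intro j hj; simp
  rw [Finset.sum_congr rfl e1, sum_shift_k (fun i => a (i - 1) * w i) 1 2 (J - 1)]
  have hJ1 : J - 1 + 1 = J := by omega
  rw [hJ1]
  rw [sum_dropR (fun i => a (i - 1) * w i) 3 J (by omega) (by omega),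
      sum_dropL (fun i => a (i - 1) * w i) 2 (J - 1) (by omega)]
  simp [ha1, hwJ]

private lemma shiftB (J : ℕ) (hJ : 5 ≤ J) (a w : ℕ → ℝ)
    (hw1 : w 1 = 0) (haJ : a J = 0) :
    ∑ j ∈ Finset.Icc 2 (J - 1), a j * w (j - 1)
      = ∑ j ∈ Finset.Icc 2 (J - 1), a (j + 1) * w j := by
  have h1 := shiftA J hJ w a hw1 haJ
  calc ∑ j ∈ Finset.Icc 2 (J - 1), a j * w (j - 1)
      = ∑ j ∈ Finset.Icc 2 (J - 1), w (j - 1) * a j :=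
        Finset.sum_congr rfl fun j _ => mul_comm _ _
    _ = ∑ j ∈ Finset.Icc 2 (J - 1), w j * a (j + 1) := h1.symm
    _ = ∑ j ∈ Finset.Icc 2 (J - 1), a (j + 1) * w j :=
        Finset.sum_congr rfl fun j _ => mul_comm _ _

private lemma shiftA2 (J : ℕ) (hJ : 5 ≤ J) (a w : ℕ → ℝ)
    (ha0 : a 0 = 0) (ha1 : a 1 = 0) (hwJ : w J = 0) (hwJ1 : w (J + 1) = 0) :
    ∑ j ∈ Finset.Icc 2 (J - 1), a j * w (j + 2)
      = ∑ j ∈ Finset.Icc 2 (J - 1), a (j - 2) * w j := by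
  have e1 : ∀ j ∈ Finset.Icc 2 (J - 1),
      a j * w (j + 2) = (fun i => a (i - 2) * w i) (j + 2) := by
    intro j hj; simp
  rw [Finset.sum_congr rfl e1, sum_shift_k (fun i => a (i - 2) * w i) 2 2 (J - 1)]
  have hJ1 : J - 1 + 2 = J + 1 := by omega
  rw [hJ1]
  rw [sum_dropR (fun i => a (i - 2) * w i) 4 (J + 1) (by omega) (by omega)]
  have hJ2 : J + 1 - 1 = J := by omega
  rw [hJ2]
  rw [sum_dropR (fun i => a (i - 2) * w i) 4 J (by omega) (by omega),
      sum_dropL (fun i => a (i - 2) * w i) 2 (J - 1) (by omega),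
      sum_dropL (fun i => a (i - 2) * w i) 3 (J - 1) (by omega)]
  simp [ha0, ha1, hwJ, hwJ1]

private lemma key_sum (J : ℕ) (hJ : 5 ≤ J) (h γ : ℝ) (hne : h ≠ 0)
    (a F b d : ℕ → ℝ)
    (ha0 : a 0 = 0) (ha1 : a 1 = 0) (haJ : a J = 0) (haJ1 : a (J + 1) = 0)
    (hF1 : F 1 = 0) (hFJ : F J = 0) (hb1 : b 1 = 0) (hbJ : b J = 0)
    (hd : ∀ j ∈ Finset.Icc 2 (J - 1),
      d j + (a (j + 2) - 2 * a (j + 1) + 2 * a (j - 1) - a (j - 2)) / (2 * h ^ 3)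
          + (F (j + 1) - F (j - 1)) / (2 * h)
        = γ * ((b (j + 1) - b (j - 1)) / (2 * h))) :
    ∑ j ∈ Finset.Icc 2 (J - 1), h * (2 * a j ^ 1 * d j)
      = 2 * ((∑ j ∈ Finset.Icc 2 (J - 1), h * (F j) * ((a (j + 1) - a (j - 1)) / (2 * h)))
          - γ * ∑ j ∈ Finset.Icc 2 (J - 1),
              h * (b j) * ((a (j + 1) - a (j - 1)) / (2 * h))) := by
  -- commutation helpers
  have hc1 : ∑ j ∈ Finset.Icc 2 (J - 1), a (j - 1) * a j
      = ∑ j ∈ Finset.Icc 2 (J - 1), a j * a (j - 1) :=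
    Finset.sum_congr rfl fun j _ => mul_comm _ _
  have hc2 : ∑ j ∈ Finset.Icc 2 (J - 1), a (j + 1) * a j
      = ∑ j ∈ Finset.Icc 2 (J - 1), a j * a (j + 1) :=
    Finset.sum_congr rfl fun j _ => mul_comm _ _
  have hc3 : ∑ j ∈ Finset.Icc 2 (J - 1), a (j - 2) * a j
      = ∑ j ∈ Finset.Icc 2 (J - 1), a j * a (j - 2) :=
    Finset.sum_congr rfl fun j _ => mul_comm _ _
  have hA1 := shiftA J hJ a a ha1 haJ
  have hB1 := shiftB J hJ a a ha1 haJ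
  have hA2 := shiftA2 J hJ a a ha0 ha1 haJ haJ1
  have hT : ∑ j ∈ Finset.Icc 2 (J - 1), a j * a (j + 1)
      = ∑ j ∈ Finset.Icc 2 (J - 1), a j * a (j - 1) := by linarith
  have hT2 : ∑ j ∈ Finset.Icc 2 (J - 1), a j * a (j + 2)
      = ∑ j ∈ Finset.Icc 2 (J - 1), a j * a (j - 2) := by linarith
  have S3 : ∑ j ∈ Finset.Icc 2 (J - 1),
      a j * (a (j + 2) - 2 * a (j + 1) + 2 * a (j - 1) - a (j - 2)) = 0 := by
    have e : ∀ j ∈ Finset.Icc 2 (J - 1),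
        a j * (a (j + 2) - 2 * a (j + 1) + 2 * a (j - 1) - a (j - 2))
          = (a j * a (j + 2) - a j * a (j - 2))
            - 2 * (a j * a (j + 1) - a j * a (j - 1)) := fun j _ => by ring
    rw [Finset.sum_congr rfl e, Finset.sum_sub_distrib, Finset.sum_sub_distrib,
        ← Finset.mul_sum, Finset.sum_sub_distrib]
    rw [hT, hT2]; ring
  have SF : ∑ j ∈ Finset.Icc 2 (J - 1), a j * (F (j + 1) - F (j - 1))
      = - ∑ j ∈ Finset.Icc 2 (J - 1), F j * (a (j + 1) - a (j - 1)) := by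
    have e : ∀ j ∈ Finset.Icc 2 (J - 1),
        a j * (F (j + 1) - F (j - 1)) = a j * F (j + 1) - a j * F (j - 1) :=
      fun j _ => by ring
    rw [Finset.sum_congr rfl e, Finset.sum_sub_distrib, shiftA J hJ a F ha1 hFJ,
        shiftB J hJ a F hF1 haJ, ← Finset.sum_neg_distrib, ← Finset.sum_sub_distrib]
    exact Finset.sum_congr rfl fun j _ => by ring
  have Sb : ∑ j ∈ Finset.Icc 2 (J - 1), a j * (b (j + 1) - b (j - 1))
      = - ∑ j ∈ Finset.Icc 2 (J - 1), b j * (a (j + 1) - a (j - 1)) := by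
    have e : ∀ j ∈ Finset.Icc 2 (J - 1),
        a j * (b (j + 1) - b (j - 1)) = a j * b (j + 1) - a j * b (j - 1) :=
      fun j _ => by ring
    rw [Finset.sum_congr rfl e, Finset.sum_sub_distrib, shiftA J hJ a b ha1 hbJ,
        shiftB J hJ a b hb1 haJ, ← Finset.sum_neg_distrib, ← Finset.sum_sub_distrib]
    exact Finset.sum_congr rfl fun j _ => by ring
  -- rewrite the left-hand side using the equation
  have e1 : ∀ j ∈ Finset.Icc 2 (J - 1), h * (2 * a j ^ 1 * d j)
      = γ * (a j * (b (j + 1) - b (j - 1)))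
        - (a j * (a (j + 2) - 2 * a (j + 1) + 2 * a (j - 1) - a (j - 2))) / h ^ 2
        - a j * (F (j + 1) - F (j - 1)) := by
    intro j hj
    have hdj : d j = γ * ((b (j + 1) - b (j - 1)) / (2 * h))
        - (a (j + 2) - 2 * a (j + 1) + 2 * a (j - 1) - a (j - 2)) / (2 * h ^ 3)
        - (F (j + 1) - F (j - 1)) / (2 * h) := by
      have := hd j hj; linarith
    rw [hdj]; field_simp
  rw [Finset.sum_congr rfl e1, Finset.sum_sub_distrib, Finset.sum_sub_distrib,
      ← Finset.mul_sum, ← Finset.sum_div, S3, SF, Sb]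
  have e2 : ∀ (c : ℕ → ℝ),
      ∑ j ∈ Finset.Icc 2 (J - 1), h * (c j) * ((a (j + 1) - a (j - 1)) / (2 * h))
        = (∑ j ∈ Finset.Icc 2 (J - 1), c j * (a (j + 1) - a (j - 1))) / 2 := by
    intro c
    rw [Finset.sum_div]
    apply Finset.sum_congr rfl
    intro j _
    field_simp
  rw [e2 F, e2 b]
  ring

/-- Identity (360) in the proof of Lemma 4.1: for solutions of the semidiscrete
truncated KdV equation `v_j′ + D³v_j + D₀ f(v)_j = γ D₀(g′(v)|u|²)_j` on `X_J`,
`(1/2) d/dt ‖v(t)‖₂² = Σ_j h f(v_j) D₀v_j − γ Σ_j h g′(v_j)|u_j|² D₀v_j`. -/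
theorem semidiscrete_kdv_l2_identity
    (J : ℕ) (hJ : 5 ≤ J) (L h : ℝ) (hL : 0 < L) (hh : h = L / (J + 1))
    (γ T : ℝ) (hT : 0 < T)
    (f g f' g' : ℝ → ℝ)
    (hf : ∀ s : ℝ, HasDerivAt f (f' s) s) (hf0 : f 0 = 0)
    (hg : ∀ s : ℝ, HasDerivAt g (g' s) s)
    (u : ℝ → ℕ → ℂ) (u' : ℝ → ℕ → ℂ) (v : ℝ → ℕ → ℝ) (v' : ℝ → ℕ → ℝ)
    (hu : ∀ j : ℕ, ∀ t ∈ Set.Icc (0 : ℝ) T,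
      HasDerivWithinAt (fun s => u s j) (u' t j) (Set.Icc (0 : ℝ) T) t)
    (hv : ∀ j : ℕ, ∀ t ∈ Set.Icc (0 : ℝ) T,
      HasDerivWithinAt (fun s => v s j) (v' t j) (Set.Icc (0 : ℝ) T) t)
    (hubc : ∀ t ∈ Set.Icc (0 : ℝ) T,
      u t 0 = 0 ∧ u t 1 = 0 ∧ u t J = 0 ∧ u t (J + 1) = 0)
    (hvbc : ∀ t ∈ Set.Icc (0 : ℝ) T,
      v t 0 = 0 ∧ v t 1 = 0 ∧ v t J = 0 ∧ v t (J + 1) = 0)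
    (heq : ∀ t ∈ Set.Icc (0 : ℝ) T, ∀ j ∈ Finset.Icc 2 (J - 1),
      v' t j
        + (v t (j + 2) - 2 * v t (j + 1) + 2 * v t (j - 1) - v t (j - 2)) / (2 * h ^ 3)
        + (f (v t (j + 1)) - f (v t (j - 1))) / (2 * h)
      = γ * ((g' (v t (j + 1)) * ‖u t (j + 1)‖ ^ 2
              - g' (v t (j - 1)) * ‖u t (j - 1)‖ ^ 2) / (2 * h))) :
    ∀ t ∈ Set.Icc (0 : ℝ) T,
      HasDerivWithinAt (fun s => ∑ j ∈ Finset.Icc 2 (J - 1), h * (v s j) ^ 2)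
        (2 * ((∑ j ∈ Finset.Icc 2 (J - 1),
                h * f (v t j) * ((v t (j + 1) - v t (j - 1)) / (2 * h)))
              - γ * ∑ j ∈ Finset.Icc 2 (J - 1),
                h * g' (v t j) * ‖u t j‖ ^ 2
                  * ((v t (j + 1) - v t (j - 1)) / (2 * h))))
        (Set.Icc (0 : ℝ) T) t := by
  intro t ht
  have hJc : (0 : ℝ) < (J : ℝ) + 1 := by positivity
  have hne : h ≠ 0 := by
    rw [hh]; exact ne_of_gt (div_pos hL hJc)
  obtain ⟨hu0, hu1, huJ, huJ1⟩ := hubc t ht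
  obtain ⟨hv0, hv1, hvJ, hvJ1⟩ := hvbc t ht
  have hderiv : HasDerivWithinAt (fun s => ∑ j ∈ Finset.Icc 2 (J - 1), h * (v s j) ^ 2)
      (∑ j ∈ Finset.Icc 2 (J - 1), h * ((2 : ℕ) * (v t j) ^ (2 - 1) * v' t j))
      (Set.Icc (0 : ℝ) T) t := by
    apply HasDerivWithinAt.fun_sum
    intro j _
    exact ((hv j t ht).pow 2).const_mul h
  refine hderiv.congr_deriv ?_
  have hkey := key_sum J hJ h γ hne (v t) (fun j => f (v t j))
      (fun j => g' (v t j) * ‖u t j‖ ^ 2) (v' t)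
      hv0 hv1 hvJ hvJ1
      (by simp [hv1, hf0]) (by simp [hvJ, hf0])
      (by simp [hu1]) (by simp [huJ]) (heq t ht)
  have cast2 : ∀ j ∈ Finset.Icc 2 (J - 1),
      h * ((2 : ℕ) * (v t j) ^ (2 - 1) * v' t j) = h * (2 * (v t j) ^ 1 * v' t j) := by
    intro j _; norm_num
  rw [Finset.sum_congr rfl cast2, hkey]
  have hb_eq : ∑ j ∈ Finset.Icc 2 (J - 1),
      h * (g' (v t j) * ‖u t j‖ ^ 2) * ((v t (j + 1) - v t (j - 1)) / (2 * h))
      = ∑ j ∈ Finset.Icc 2 (J - 1),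
      h * g' (v t j) * ‖u t j‖ ^ 2 * ((v t (j + 1) - v t (j - 1)) / (2 * h)) :=
    Finset.sum_congr rfl fun j _ => by ring
  rw [hb_eq]
end

section
/- Let L > 0 and α, β, γ ∈ ℝ. Let u : [0,L] → ℂ and v : [0,L] → ℝ be continuously differentiable with u(0) = u(L) = 0 and v(0) = v(L) = 0, let f : ℝ → ℝ be C¹ and g : ℝ → ℝ be C². Define m(x) = −i α g(v(x)) u(x) − i β |u(x)|² u(x) and n(x) = −(f∘v)′(x) + γ (g′(v)|u|²)′(x) (derivatives in x). Then 2γ · Im ∫₀ᴸ m(x) · conj(u′(x)) dx = −α ∫₀ᴸ v(x) n(x) dx; both sides equal αγ ∫₀ᴸ g′(v(x)) v′(x) |u(x)|² dx. -/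
open Set MeasureTheory intervalIntegral

private lemma ftc_aux {L : ℝ} (hL : 0 < L) (H H' : ℝ → ℝ)
    (hH : ∀ x ∈ Set.Icc (0:ℝ) L, HasDerivWithinAt H (H' x) (Set.Icc (0:ℝ) L) x)
    (hH' : ContinuousOn H' (Set.Icc (0:ℝ) L)) :
    ∫ x in (0:ℝ)..L, H' x = H L - H 0 := by
  apply intervalIntegral.integral_eq_sub_of_hasDeriv_right_of_le hL.le
  · exact fun x hx => (hH x hx).continuousWithinAt
  · intro x hx
    exact (hH x (Set.Ioo_subset_Icc_self hx)).mono_of_mem_nhdsWithin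
      (Icc_mem_nhdsGT_of_mem ⟨hx.1.le, hx.2⟩)
  · exact ContinuousOn.intervalIntegrable (by rwa [Set.uIcc_of_le hL.le])

/-- The key identity `2γ·Im(m, ∂ₓu) = −α(v, n)` in the proof of the conservation
of `Q^M` in Proposition 3.1, where `m = −iαg(v)u − iβ|u|²u` and
`n = −(f∘v)′ + γ(g′(v)|u|²)′` are the nonlinear terms of the Duhamel formulation
of the truncated Schrödinger–KdV system; both sides equal
`αγ ∫₀ᴸ g′(v) v′ |u|² dx`. -/
theorem duhamel_nonlinear_terms_identity
    (L α β γ : ℝ) (hL : 0 < L)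
    (u u' : ℝ → ℂ) (v v' : ℝ → ℝ)
    (f f' g g' g'' : ℝ → ℝ)
    (hu : ∀ x ∈ Set.Icc (0 : ℝ) L,
      HasDerivWithinAt u (u' x) (Set.Icc (0 : ℝ) L) x)
    (hu' : ContinuousOn u' (Set.Icc (0 : ℝ) L))
    (hv : ∀ x ∈ Set.Icc (0 : ℝ) L,
      HasDerivWithinAt v (v' x) (Set.Icc (0 : ℝ) L) x)
    (hv' : ContinuousOn v' (Set.Icc (0 : ℝ) L))
    (hu0 : u 0 = 0) (huL : u L = 0) (hv0 : v 0 = 0) (hvL : v L = 0)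
    (hf : ∀ s : ℝ, HasDerivAt f (f' s) s) (hf' : Continuous f')
    (hg : ∀ s : ℝ, HasDerivAt g (g' s) s)
    (hg' : ∀ s : ℝ, HasDerivAt g' (g'' s) s) (hg'' : Continuous g'')
    (m : ℝ → ℂ) (n w₁ w₂ : ℝ → ℝ)
    (hm : ∀ x : ℝ, m x
      = -Complex.I * (α : ℂ) * (g (v x) : ℂ) * u x
        - Complex.I * (β : ℂ) * (‖u x‖ : ℂ) ^ 2 * u x)
    (hw₁ : ∀ x ∈ Set.Icc (0 : ℝ) L,
      HasDerivWithinAt (fun y => f (v y)) (w₁ x) (Set.Icc (0 : ℝ) L) x)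
    (hw₂ : ∀ x ∈ Set.Icc (0 : ℝ) L,
      HasDerivWithinAt (fun y => g' (v y) * ‖u y‖ ^ 2) (w₂ x)
        (Set.Icc (0 : ℝ) L) x)
    (hn : ∀ x : ℝ, n x = -w₁ x + γ * w₂ x) :
    2 * γ * (∫ x in (0 : ℝ)..L, m x * (starRingEnd ℂ) (u' x)).im
      = -α * ∫ x in (0 : ℝ)..L, v x * n x
    ∧ 2 * γ * (∫ x in (0 : ℝ)..L, m x * (starRingEnd ℂ) (u' x)).im
      = α * γ * ∫ x in (0 : ℝ)..L, g' (v x) * v' x * ‖u x‖ ^ 2 := by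
  set I : Set ℝ := Set.Icc (0:ℝ) L with hI
  set φ : ℝ → ℝ := fun y => (‖u y‖ : ℝ) ^ 2 with hφdef
  set φ' : ℝ → ℝ := fun y => 2 * (u y * (starRingEnd ℂ) (u' y)).re with hφ'def
  have hud : UniqueDiffOn ℝ I := uniqueDiffOn_Icc hL
  -- continuity basics
  have hu_c : ContinuousOn u I := fun x hx => (hu x hx).continuousWithinAt
  have hv_c : ContinuousOn v I := fun x hx => (hv x hx).continuousWithinAt
  have hgc : Continuous g := continuous_iff_continuousAt.2 fun s => (hg s).continuousAt
  have hg'c : Continuous g' := continuous_iff_continuousAt.2 fun s => (hg' s).continuousAt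
  have hφ_c : ContinuousOn φ I := ((continuous_norm.comp_continuousOn hu_c).pow 2)
  have hφ'_c : ContinuousOn φ' I := by
    apply ContinuousOn.mul continuousOn_const
    exact Complex.continuous_re.comp_continuousOn
      (hu_c.mul ((Complex.continuous_conj).comp_continuousOn hu'))
  -- derivative of φ
  have hφd : ∀ x ∈ I, HasDerivWithinAt φ (φ' x) I x := by
    intro x hx
    have h1 : HasDerivWithinAt (fun y => u y * star (u y))
        (u' x * star (u x) + u x * star (u' x)) I x := (hu x hx).mul (hu x hx).star
    have h2 := (Complex.reCLM.hasFDerivAt).comp_hasDerivWithinAt x h1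
    have e1 : (fun y => Complex.reCLM (u y * star (u y))) = φ := by
      funext y
      simp [hφdef, Complex.star_def, Complex.mul_conj, Complex.sq_norm]
    have e2 : Complex.reCLM (u' x * star (u x) + u x * star (u' x)) = φ' x := by
      simp [hφ'def, Complex.star_def, Complex.mul_re, Complex.conj_re, Complex.conj_im]
      ring
    rw [← e1, ← e2]
    exact h2
  have hφ0 : φ 0 = 0 := by simp [hφdef, hu0]
  have hφL : φ L = 0 := by simp [hφdef, huL]
  have h0I : (0:ℝ) ∈ I := by simp [hI, hL.le]
  have hLI : L ∈ I := by simp [hI, hL.le]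
  -- integrability helper
  have cInt : ∀ {h : ℝ → ℝ}, ContinuousOn h I → IntervalIntegrable h volume 0 L := by
    intro h hc
    exact ContinuousOn.intervalIntegrable (by rwa [Set.uIcc_of_le hL.le])
  -- canonical quantities
  set K : ℝ := ∫ x in (0:ℝ)..L, g' (v x) * v' x * φ x with hK
  -- (1) ∫ (g'(v) v' φ + g(v) φ') = 0, hence A := ∫ g(v) φ' = -K
  have hq_c : ContinuousOn (fun x => g' (v x) * v' x * φ x) I :=
    ((hg'c.comp_continuousOn hv_c).mul hv').mul hφ_c
  have hgφ'_c : ContinuousOn (fun x => g (v x) * φ' x) I :=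
    (hgc.comp_continuousOn hv_c).mul hφ'_c
  have E1 : (∫ x in (0:ℝ)..L, (g' (v x) * v' x * φ x + g (v x) * φ' x)) = 0 := by
    have := ftc_aux hL (fun y => g (v y) * φ y)
      (fun x => g' (v x) * v' x * φ x + g (v x) * φ' x) ?_ (hq_c.add hgφ'_c)
    · rw [this]
      show g (v L) * φ L - g (v 0) * φ 0 = 0
      rw [hφ0, hφL]; ring
    · intro x hx
      have h := ((hg (v x)).comp_hasDerivWithinAt x (hv x hx)).mul (hφd x hx)
      simp only [Function.comp_apply] at h
      show HasDerivWithinAt (fun y => g (v y) * φ y)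
        (g' (v x) * v' x * φ x + g (v x) * φ' x) I x
      rw [show g' (v x) * v' x * φ x + g (v x) * φ' x
          = g' (v x) * v' x * φ x + g (v x) * φ' x from rfl]
      exact h
  have hA : (∫ x in (0:ℝ)..L, g (v x) * φ' x) = -K := by
    have := intervalIntegral.integral_add (cInt hq_c) (cInt hgφ'_c)
    rw [this] at E1
    linarith [E1]
  -- (2) B := ∫ φ φ' = 0
  have hB : (∫ x in (0:ℝ)..L, φ x * φ' x) = 0 := by
    have E2 : (∫ x in (0:ℝ)..L, (2:ℝ) * (φ x * φ' x)) = 0 := by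
      have := ftc_aux hL (fun y => φ y * φ y)
        (fun x => 2 * (φ x * φ' x)) ?_
        (continuousOn_const.mul (hφ_c.mul hφ'_c))
      · rw [this]
        show φ L * φ L - φ 0 * φ 0 = 0
        rw [hφ0, hφL]; ring
      · intro x hx
        have h := (hφd x hx).mul (hφd x hx)
        show HasDerivWithinAt (fun y => φ y * φ y) ((2:ℝ) * (φ x * φ' x)) I x
        rw [show (2:ℝ) * (φ x * φ' x) = φ' x * φ x + φ x * φ' x from by ring]
        exact h
    rw [intervalIntegral.integral_const_mul] at E2
    linarith [E2]
  -- w₁ and w₂ identified on I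
  have hw₁eq : ∀ x ∈ I, w₁ x = f' (v x) * v' x := by
    intro x hx
    have h1 := (hw₁ x hx).derivWithin (hud x hx)
    have h2 := (((hf (v x)).comp_hasDerivWithinAt x (hv x hx))).derivWithin (hud x hx)
    rw [← h1, ← h2]
    rfl
  have hw₂eq : ∀ x ∈ I, w₂ x = g'' (v x) * v' x * φ x + g' (v x) * φ' x := by
    intro x hx
    have h1 := (hw₂ x hx).derivWithin (hud x hx)
    have h2 := (((hg' (v x)).comp_hasDerivWithinAt x (hv x hx)).mul (hφd x hx)).derivWithin
      (hud x hx)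
    simp only [Function.comp_apply] at h2
    rw [← h1, ← h2]
    rfl
  have hw₂_c : ContinuousOn w₂ I := by
    apply ContinuousOn.congr (f := fun x => g'' (v x) * v' x * φ x + g' (v x) * φ' x)
    · exact (((hg''.comp_continuousOn hv_c).mul hv').mul hφ_c).add
        ((hg'c.comp_continuousOn hv_c).mul hφ'_c)
    · exact hw₂eq
  -- (3) ∫ v·(f'(v)v') = 0
  have E3 : (∫ x in (0:ℝ)..L, v x * (f' (v x) * v' x)) = 0 := by
    set F : ℝ → ℝ := fun s => ∫ t in (0:ℝ)..s, t * f' t with hF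
    have hFd : ∀ s : ℝ, HasDerivAt F (s * f' s) s := fun s =>
      ((continuous_id.mul hf').integral_hasStrictDerivAt 0 s).hasDerivAt
    have := ftc_aux hL (fun y => F (v y)) (fun x => v x * (f' (v x) * v' x)) ?_
      ((hv_c.mul ((hf'.comp_continuousOn hv_c).mul hv')))
    · rw [this]
      show F (v L) - F (v 0) = 0
      rw [hv0, hvL]; ring
    · intro x hx
      have h := (hFd (v x)).comp_hasDerivWithinAt x (hv x hx)
      show HasDerivWithinAt (fun y => F (v y)) (v x * (f' (v x) * v' x)) I x
      rw [show v x * (f' (v x) * v' x) = v x * f' (v x) * v' x from by ring]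
      exact h
  -- (4) ∫ (v'·g'(v)·φ + v·w₂) = 0, hence ∫ v w₂ = -K
  have E4 : (∫ x in (0:ℝ)..L, (g' (v x) * v' x * φ x + v x * w₂ x)) = 0 := by
    have := ftc_aux hL (fun y => v y * (g' (v y) * φ y))
      (fun x => g' (v x) * v' x * φ x + v x * w₂ x) ?_
      (hq_c.add (hv_c.mul hw₂_c))
    · rw [this]
      show v L * (g' (v L) * φ L) - v 0 * (g' (v 0) * φ 0) = 0
      rw [hv0, hvL]; ring
    · intro x hx
      have h := (hv x hx).mul (hw₂ x hx)
      show HasDerivWithinAt (fun y => v y * (g' (v y) * φ y))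
        (g' (v x) * v' x * φ x + v x * w₂ x) I x
      rw [show g' (v x) * v' x * φ x + v x * w₂ x
          = v' x * (g' (v x) * φ x) + v x * w₂ x from by
        rw [hw₂eq x hx]; ring]
      exact h
  have hvw₂ : (∫ x in (0:ℝ)..L, v x * w₂ x) = -K := by
    have := intervalIntegral.integral_add (cInt hq_c) (cInt (h := fun x => v x * w₂ x) (hv_c.mul hw₂_c))
    rw [this] at E4
    linarith [E4]
  -- RHS1 : ∫ v n = γ * (-K)
  have hvn : (∫ x in (0:ℝ)..L, v x * n x) = γ * (-K) := by
    have hsplit : (∫ x in (0:ℝ)..L, v x * n x)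
        = (∫ x in (0:ℝ)..L, (-(v x * (f' (v x) * v' x)) + γ * (v x * w₂ x))) := by
      apply intervalIntegral.integral_congr
      intro x hx
      rw [Set.uIcc_of_le hL.le] at hx
      show v x * n x = -(v x * (f' (v x) * v' x)) + γ * (v x * w₂ x)
      rw [hn x, hw₁eq x hx]
      ring
    rw [hsplit, intervalIntegral.integral_add, intervalIntegral.integral_neg,
      intervalIntegral.integral_const_mul, E3, hvw₂]
    · ring
    · exact (cInt (hv_c.mul ((hf'.comp_continuousOn hv_c).mul hv'))).neg
    · exact (cInt (hv_c.mul hw₂_c)).const_mul γ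
  -- LHS
  have hm_c : ContinuousOn (fun x => m x * (starRingEnd ℂ) (u' x)) I := by
    have hc : ContinuousOn (fun x =>
        (-Complex.I * (α : ℂ) * (g (v x) : ℂ) * u x
          - Complex.I * (β : ℂ) * ((‖u x‖ : ℝ) : ℂ) ^ 2 * u x)
        * (starRingEnd ℂ) (u' x)) I := by
      apply ContinuousOn.mul _ (Complex.continuous_conj.comp_continuousOn hu')
      apply ContinuousOn.sub
      · exact (continuousOn_const.mul
          (Complex.continuous_ofReal.comp_continuousOn
            (hgc.comp_continuousOn hv_c))).mul hu_c
      · exact (continuousOn_const.mul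
          ((Complex.continuous_ofReal.comp_continuousOn
            (continuous_norm.comp_continuousOn hu_c)).pow 2)).mul hu_c
    exact hc.congr fun x _ => by rw [hm x]
  have hIm : (∫ x in (0:ℝ)..L, m x * (starRingEnd ℂ) (u' x)).im
      = ∫ x in (0:ℝ)..L, (m x * (starRingEnd ℂ) (u' x)).im := by
    have hint : IntervalIntegrable (fun x => m x * (starRingEnd ℂ) (u' x)) volume 0 L :=
      ContinuousOn.intervalIntegrable (by rwa [Set.uIcc_of_le hL.le])
    exact (Complex.imCLM.intervalIntegral_comp_comm hint).symm
  have hpt : ∀ x : ℝ, (m x * (starRingEnd ℂ) (u' x)).im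
      = (-(α/2)) * (g (v x) * φ' x) + (-(β/2)) * (φ x * φ' x) := by
    intro x
    have h1 : (m x * (starRingEnd ℂ) (u' x)).im
        = -((α * g (v x) + β * φ x) * (u x * (starRingEnd ℂ) (u' x)).re) := by
      rw [hm x, show ((‖u x‖ : ℂ))^2
          = (((‖u x‖ : ℝ) ^ 2 : ℝ) : ℂ) from by push_cast; ring]
      simp [hφdef, pow_two, Complex.mul_im, Complex.mul_re, Complex.conj_re,
        Complex.conj_im]
      ring
    rw [h1, hφ'def]
    simp only
    ring
  have hImval : (∫ x in (0:ℝ)..L, m x * (starRingEnd ℂ) (u' x)).im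
      = (-(α/2)) * (-K) + (-(β/2)) * 0 := by
    rw [hIm]
    have : (∫ x in (0:ℝ)..L, (m x * (starRingEnd ℂ) (u' x)).im)
        = ∫ x in (0:ℝ)..L, ((-(α/2)) * (g (v x) * φ' x) + (-(β/2)) * (φ x * φ' x)) := by
      apply intervalIntegral.integral_congr
      intro x _
      exact hpt x
    rw [this, intervalIntegral.integral_add ((cInt hgφ'_c).const_mul _)
      ((cInt (h := fun x => φ x * φ' x) (hφ_c.mul hφ'_c)).const_mul _),
      intervalIntegral.integral_const_mul, intervalIntegral.integral_const_mul, hA, hB]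
  constructor
  · rw [hImval, hvn]; ring
  · rw [hImval]; ring
end
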